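/- Let Φ: M_n(ℂ) → M_n(ℂ) be unital, trace-preserving, and completely positive, and define the matrix D_Φ by (D_Φ)_{ij} = Φ(E_{ii})_{jj}. Then D_Φ is doubly stochastic and rank(Φ) ≥ rank(D_Φ). -/

import Mathlib

open Matrix Module Submodule

lemma aux_li {N : ℕ} {ι : Type*} [Fintype ι] {v : ι → (Fin N → ℝ)}
    (hv : LinearIndependent ℝ v) :
    LinearIndependent ℂ (fun i (j : Fin N) => (v i j : ℂ)) := by
  rw [Fintype.linearIndependent_iff] at hv ⊢
  intro g hg i
  have h1 : ∀ j, ∑ i, g i * (v i j : ℂ) = 0 := by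
    intro j
    have := congrFun hg j
    simpa using this
  have hre : ∀ i, (g i).re = 0 := by
    refine hv (fun i => (g i).re) ?_
    funext j
    have := congrArg Complex.re (h1 j)
    simpa [Complex.mul_re] using this
  have him : ∀ i, (g i).im = 0 := by
    refine hv (fun i => (g i).im) ?_
    funext j
    have := congrArg Complex.im (h1 j)
    simpa [Complex.mul_im] using this
  exact Complex.ext (hre i) (him i)

lemma rank_le_rank_map {N : ℕ} (D : Matrix (Fin N) (Fin N) ℝ) :
    D.rank ≤ (D.map (fun x => (x : ℂ))).rank := by
  classical
  set W : Submodule ℝ (Fin N → ℝ) := Submodule.span ℝ (Set.range Dᵀ) with hW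
  have hrank : D.rank = finrank ℝ W := Matrix.rank_eq_finrank_span_cols D
  let b := Basis.ofVectorSpace ℝ W
  have hcard : finrank ℝ W = Fintype.card (Basis.ofVectorSpaceIndex ℝ W) :=
    Module.finrank_eq_card_basis b
  set v : Basis.ofVectorSpaceIndex ℝ W → (Fin N → ℝ) := fun i => (b i : Fin N → ℝ) with hv
  have hvW : ∀ i, v i ∈ W := fun i => (b i).2
  have hvli : LinearIndependent ℝ v :=
    b.linearIndependent.map' W.subtype (Submodule.ker_subtype W)
  have hwli : LinearIndependent ℂ (fun i (j : Fin N) => (v i j : ℂ)) := aux_li hvli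
  set L : (Fin N → ℝ) →ₗ[ℝ] (Fin N → ℂ) :=
    LinearMap.compLeft (Algebra.linearMap ℝ ℂ) (Fin N) with hL
  have hLD : L ∘ Dᵀ = (D.map (fun x => (x : ℂ)))ᵀ := rfl
  have hw : ∀ i, (fun j => (v i j : ℂ)) ∈
      Submodule.span ℂ (Set.range (D.map (fun x => (x : ℂ)))ᵀ) := by
    intro i
    have h1 : L (v i) ∈ Submodule.map L W := ⟨v i, hvW i, rfl⟩
    have h2 : Submodule.map L W ≤
        Submodule.restrictScalars ℝ (Submodule.span ℂ (Set.range (D.map (fun x => (x : ℂ)))ᵀ)) := by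
      rw [hW, Submodule.map_span]
      refine Submodule.span_le.2 ?_
      rintro x ⟨y, ⟨j, rfl⟩, rfl⟩
      exact Submodule.subset_span ⟨j, (congrFun hLD j).symm⟩
    exact h2 h1
  have key : Fintype.card (Basis.ofVectorSpaceIndex ℝ W) ≤
      finrank ℂ (Submodule.span ℂ (Set.range (D.map (fun x => (x : ℂ)))ᵀ)) := by
    set S := Submodule.span ℂ (Set.range (D.map (fun x => (x : ℂ)))ᵀ)
    have : LinearIndependent ℂ (fun i => (⟨(fun j => (v i j : ℂ)), hw i⟩ : S)) := by
      apply LinearIndependent.of_comp S.subtype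
      exact hwli
    exact this.fintype_card_le_finrank
  rw [hrank, hcard, Matrix.rank_eq_finrank_span_cols]
  exact key

theorem rank_ge_rank_doublyStochastic {n p : ℕ}
    (K : Fin p → Matrix (Fin n) (Fin n) ℂ)
    (hu : ∑ k, K k * (K k)ᴴ = 1)
    (htp : ∑ k, (K k)ᴴ * K k = 1)
    (Φ : Matrix (Fin n) (Fin n) ℂ →ₗ[ℂ] Matrix (Fin n) (Fin n) ℂ)
    (hΦ : ∀ X, Φ X = ∑ k, K k * X * (K k)ᴴ)
    (D : Matrix (Fin n) (Fin n) ℝ)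
    (hD : ∀ i j, (D i j : ℂ) = Φ (Matrix.single i i 1) j j) :
    (∀ i j, 0 ≤ D i j) ∧ (∀ i, ∑ j, D i j = 1) ∧ (∀ j, ∑ i, D i j = 1) ∧
      D.rank ≤ Module.finrank ℂ (LinearMap.range Φ) := by
  have hDC : ∀ i j, (D i j : ℂ) = ∑ k, K k j i * (starRingEnd ℂ) (K k j i) := by
    intro i j
    rw [hD i j, hΦ]
    simp [Matrix.sum_apply, Matrix.mul_apply, Matrix.single, Matrix.conjTranspose_apply,
      Matrix.of_apply, ite_and, ite_mul, Finset.sum_ite_eq]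
  have hDR : ∀ i j, D i j = ∑ k, Complex.normSq (K k j i) := by
    intro i j
    have := hDC i j
    simp only [Complex.mul_conj] at this
    exact_mod_cast this
  refine ⟨?_, ?_, ?_, ?_⟩
  · intro i j
    rw [hDR]
    exact Finset.sum_nonneg fun k _ => Complex.normSq_nonneg _
  · intro i
    have h := congrFun (congrFun htp i) i
    simp only [Matrix.sum_apply, Matrix.mul_apply, Matrix.conjTranspose_apply,
      Matrix.one_apply_eq] at h
    have : ((∑ j, D i j : ℝ) : ℂ) = 1 := by
      push_cast
      simp only [hDC]
      rw [Finset.sum_comm]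
      rw [← h]
      refine Finset.sum_congr rfl fun k _ => Finset.sum_congr rfl fun j _ => ?_
      rw [starRingEnd_apply]
      exact mul_comm _ _
    exact_mod_cast this
  · intro j
    have h := congrFun (congrFun hu j) j
    simp only [Matrix.sum_apply, Matrix.mul_apply, Matrix.conjTranspose_apply,
      Matrix.one_apply_eq] at h
    have : ((∑ i, D i j : ℝ) : ℂ) = 1 := by
      push_cast
      simp only [hDC]
      rw [Finset.sum_comm]
      exact h
    exact_mod_cast this
  · -- rank part
    have hdiagsum : ∀ w : Fin n → ℂ,
        Matrix.diagonal w = ∑ i, w i • Matrix.single i i 1 := by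
      intro w
      ext a b
      simp only [Matrix.sum_apply, Matrix.smul_apply, Matrix.single, Matrix.of_apply,
        Matrix.diagonal_apply, smul_eq_mul, mul_ite, mul_one, mul_zero]
      by_cases hab : a = b
      · subst hab; simp
      · simp [hab, Finset.sum_ite_of_false, fun i (h : i = a ∧ i = b) => hab (h.1 ▸ h.2)]
    have hmul : ((D.map (fun x => (x : ℂ)))ᵀ).mulVecLin =
        (Matrix.diagLinearMap (Fin n) ℂ ℂ) ∘ₗ
          (Φ ∘ₗ (Matrix.diagonalLinearMap (Fin n) ℂ ℂ)) := by
      apply LinearMap.ext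
      intro w
      funext j
      show ((D.map (fun x => (x : ℂ)))ᵀ).mulVec w j = (Φ (Matrix.diagonal w)).diag j
      rw [hdiagsum w, map_sum]
      simp only [_root_.map_smul, Matrix.diag, Matrix.sum_apply, Matrix.smul_apply, smul_eq_mul,
        Matrix.mulVec, dotProduct, Matrix.transpose_apply, Matrix.map_apply]
      refine Finset.sum_congr rfl fun i _ => ?_
      rw [← hD i j]
      ring
    calc D.rank ≤ (D.map (fun x => (x : ℂ))).rank := rank_le_rank_map D
      _ = ((D.map (fun x => (x : ℂ)))ᵀ).rank := (Matrix.rank_transpose _).symm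
      _ = Module.finrank ℂ (LinearMap.range (((D.map (fun x => (x : ℂ)))ᵀ).mulVecLin)) := rfl
      _ = Module.finrank ℂ (LinearMap.range ((Matrix.diagLinearMap (Fin n) ℂ ℂ) ∘ₗ
            (Φ ∘ₗ (Matrix.diagonalLinearMap (Fin n) ℂ ℂ)))) := by rw [hmul]
      _ ≤ Module.finrank ℂ (LinearMap.range Φ) := by
          rw [LinearMap.range_comp]
          refine le_trans (Submodule.finrank_map_le _ _) ?_
          exact Submodule.finrank_mono (LinearMap.range_comp_le_range _ _)
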